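/- Let ξ₁,…,ξₙ be independent standard Gaussian random variables, let 1 ≤ k ≤ n/2 be an integer, and let 0 < ε < 1/2. Define α⁺ and α⁻ by F(α⁺) = (1+ε)k/n and F(α⁻) = (1-ε)k/n, where F is the standard Gaussian CDF. Then P{ω_k < α⁻} ≤ exp(-ε²k/3) and P{ω_k > α⁺} ≤ exp(-ε²k/3), where ω_k is the k-th order statistic. -/

import Mathlib

open MeasureTheory ProbabilityTheory

/-- The `k`-th order statistic (1-based): the `k`-th smallest among the values
`v 0, …, v (n-1)`. -/
noncomputable def orderStat {n : ℕ} (v : Fin n → ℝ) (k : ℕ) : ℝ :=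
  ((List.ofFn v).insertionSort (· ≤ ·))[k - 1]!


/-- The standard Gaussian cumulative distribution function. -/
noncomputable def stdGaussCDF (t : ℝ) : ℝ :=
  (Real.sqrt (2 * Real.pi))⁻¹ * ∫ τ in Set.Iic t, Real.exp (-τ ^ 2 / 2)

/-! ### Auxiliary lemmas -/

section Aux

lemma sorted_count_iff {l : List ℝ} (hl : l.Pairwise (· ≤ ·)) (p : ℝ → Bool)
    (hp : ∀ x y : ℝ, x ≤ y → p y = true → p x = true) {i : ℕ} (hi : i < l.length) :
    p l[i] = true ↔ i < l.countP p := by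
  have hpair := List.pairwise_iff_getElem.mp hl
  constructor
  · intro h
    have hcount : (l.take (i+1)).countP p = i + 1 := by
      rw [List.countP_eq_length.mpr, List.length_take]
      · omega
      · intro x hx
        obtain ⟨j, hj, rfl⟩ := List.mem_take_iff_getElem.mp hx
        have hj1 : j < l.length := lt_of_lt_of_le hj (min_le_right _ _)
        have hj2 : j ≤ i := Nat.lt_succ_iff.mp (lt_of_lt_of_le hj (min_le_left _ _))
        rcases lt_or_eq_of_le hj2 with hji | hji
        · exact hp _ _ (hpair j i hj1 hi hji) h
        · subst hji; exact h
    have := List.countP_append (p := p) (l₁ := l.take (i+1)) (l₂ := l.drop (i+1))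
    rw [List.take_append_drop, hcount] at this
    omega
  · intro h
    by_contra hnot
    have hdrop : (l.drop i).countP p = 0 := by
      rw [List.countP_eq_zero]
      intro x hx
      obtain ⟨j, hj, rfl⟩ := List.mem_iff_getElem.mp hx
      rw [List.getElem_drop] at *
      intro hpx
      have hij : i ≤ i + j := Nat.le_add_right _ _
      have hij' : i + j < l.length := by
        have := List.length_drop (i := i) (l := l); omega
      rcases Nat.lt_or_ge i (i+j) with hlt | hge
      · exact hnot (hp _ _ (hpair i (i+j) hi hij' hlt) hpx)
      · have : j = 0 := by omega
        subst this
        simp only [Nat.add_zero] at hpx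
        exact hnot hpx
    have := List.countP_append (p := p) (l₁ := l.take i) (l₂ := l.drop i)
    rw [List.take_append_drop, hdrop] at this
    have hle := List.countP_le_length (p := p) (l := l.take i)
    rw [List.length_take] at hle
    omega

lemma countP_ofFn : ∀ {n : ℕ} (v : Fin n → ℝ) (p : ℝ → Bool),
    (List.ofFn v).countP p = ∑ i, if p (v i) then 1 else 0
  | 0, v, p => by simp
  | (n+1), v, p => by
    rw [List.ofFn_succ, List.countP_cons, countP_ofFn (fun i => v i.succ) p,
      Fin.sum_univ_succ]
    by_cases h : p (v 0) <;> simp [h] <;> omega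

lemma orderStat_lt_iff {n : ℕ} (v : Fin n → ℝ) {k : ℕ} (hk1 : 1 ≤ k) (hkn : k ≤ n) (a : ℝ) :
    orderStat v k < a ↔ k ≤ (List.ofFn v).countP (fun x => decide (x < a)) := by
  set l := (List.ofFn v).insertionSort (· ≤ ·) with hl
  have hlen : l.length = n := by simp [hl]
  have hi : k - 1 < l.length := by omega
  have hsorted : l.Pairwise (· ≤ ·) := List.pairwise_insertionSort _ _
  have hperm : l.Perm (List.ofFn v) := List.perm_insertionSort _ _
  have key := sorted_count_iff hsorted (fun x => decide (x < a))
    (fun x y hxy hy => by simp_all; exact lt_of_le_of_lt hxy hy) hi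
  rw [hperm.countP_eq] at key
  have hg : l[k-1]! = l[k-1] := getElem!_pos l (k-1) hi
  show l[k-1]! < a ↔ _
  rw [hg]
  constructor
  · intro h; have := key.mp (by simpa using h); omega
  · intro h; have := key.mpr (by omega); simpa using this

lemma lt_orderStat_iff {n : ℕ} (v : Fin n → ℝ) {k : ℕ} (hk1 : 1 ≤ k) (hkn : k ≤ n) (a : ℝ) :
    a < orderStat v k ↔ (List.ofFn v).countP (fun x => decide (x ≤ a)) ≤ k - 1 := by
  set l := (List.ofFn v).insertionSort (· ≤ ·) with hl
  have hlen : l.length = n := by simp [hl]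
  have hi : k - 1 < l.length := by omega
  have hsorted : l.Pairwise (· ≤ ·) := List.pairwise_insertionSort _ _
  have hperm : l.Perm (List.ofFn v) := List.perm_insertionSort _ _
  have key := sorted_count_iff hsorted (fun x => decide (x ≤ a))
    (fun x y hxy hy => by simp_all; exact le_trans hxy hy) hi
  rw [hperm.countP_eq] at key
  have hg : l[k-1]! = l[k-1] := getElem!_pos l (k-1) hi
  show a < l[k-1]! ↔ _
  rw [hg]
  constructor
  · intro h
    by_contra hc
    have := key.mpr (by omega)
    simp at this
    exact absurd h (not_lt.mpr this)
  · intro h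
    rcases lt_or_ge a (l[k-1]) with h' | h'
    · exact h'
    · have := key.mp (by simpa using h'); omega

lemma stdGaussCDF_nonneg (a : ℝ) : 0 ≤ stdGaussCDF a := by
  unfold stdGaussCDF
  have h1 : (0:ℝ) ≤ (Real.sqrt (2 * Real.pi))⁻¹ := by positivity
  refine mul_nonneg h1 (integral_nonneg fun x => (Real.exp_pos _).le)

lemma gaussian_Iic (a : ℝ) : gaussianReal 0 1 (Set.Iic a) = ENNReal.ofReal (stdGaussCDF a) := by
  rw [gaussianReal_apply_eq_integral 0 (by norm_num) (Set.Iic a)]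
  congr 1
  unfold stdGaussCDF
  rw [← integral_const_mul]
  congr 1 with x
  simp [gaussianPDFReal]

lemma gaussian_Iio (a : ℝ) : gaussianReal 0 1 (Set.Iio a) = ENNReal.ofReal (stdGaussCDF a) := by
  rw [← gaussian_Iic]
  have h1 : gaussianReal 0 1 {a} = 0 :=
    gaussianReal_absolutelyContinuous 0 (by norm_num) Real.volume_singleton
  apply le_antisymm (measure_mono Set.Iio_subset_Iic_self)
  calc gaussianReal 0 1 (Set.Iic a) = gaussianReal 0 1 (Set.Iio a ∪ {a}) := by
        rw [Set.Iio_union_right]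
    _ ≤ gaussianReal 0 1 (Set.Iio a) + gaussianReal 0 1 {a} := measure_union_le _ _
    _ = gaussianReal 0 1 (Set.Iio a) := by rw [h1, add_zero]

variable {Ω : Type*} [MeasureSpace Ω] [IsProbabilityMeasure (ℙ : Measure Ω)]

lemma exp_mul_indicator (t : ℝ) (A : Set Ω) (ω : Ω) :
    Real.exp (t * A.indicator (fun _ => (1:ℝ)) ω) =
      1 + A.indicator (fun _ => Real.exp t - 1) ω := by
  by_cases h : ω ∈ A <;> simp [h]

lemma integrable_exp_mul_ind (t : ℝ) (A : Set Ω) (hA : MeasurableSet A) :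
    Integrable (fun ω => Real.exp (t * A.indicator (fun _ => (1:ℝ)) ω)) ℙ := by
  simp only [exp_mul_indicator]
  exact (integrable_const 1).add ((integrable_const (Real.exp t - 1)).indicator hA)

lemma mgf_indicator (t : ℝ) (A : Set Ω) (hA : MeasurableSet A) :
    mgf (A.indicator fun _ => (1:ℝ)) ℙ t = 1 + (ℙ A).toReal * (Real.exp t - 1) := by
  unfold mgf
  simp only [Set.indicator_apply]
  simp only [← Set.indicator_apply, exp_mul_indicator]
  rw [integral_add (integrable_const 1)
    ((integrable_const (Real.exp t - 1)).indicator hA),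
    integral_const, integral_indicator_const _ hA]
  simp [mul_comm, measureReal_def]

section chernoff
variable {n : ℕ} {ξ : Fin n → Ω → ℝ}

lemma ind_comp (s : Set ℝ) (f : Ω → ℝ) :
    (fun ω => (f ⁻¹' s).indicator (fun _ => (1:ℝ)) ω) =
      (s.indicator fun _ => (1:ℝ)) ∘ f := by
  funext ω; by_cases h : f ω ∈ s <;> simp [h]

lemma chernoff_core (hmeas : ∀ i, Measurable (ξ i))
    (hindep : iIndepFun ξ ℙ)
    {s : Set ℝ} (hs : MeasurableSet s) {p : ℝ}
    (hp : ∀ i, (ℙ (ξ i ⁻¹' s)).toReal = p) (hp0 : 0 ≤ p) (hp1 : p ≤ 1) (t : ℝ) :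
    Integrable (fun ω => Real.exp (t * (∑ i, (ξ i ⁻¹' s).indicator (fun _ => (1:ℝ)) ω))) ℙ ∧
    mgf (fun ω => ∑ i, (ξ i ⁻¹' s).indicator (fun _ => (1:ℝ)) ω) ℙ t ≤
      Real.exp (n * (p * (Real.exp t - 1))) := by
  classical
  have hXmeas : ∀ i, Measurable (fun ω => (ξ i ⁻¹' s).indicator (fun _ => (1:ℝ)) ω) :=
    fun i => measurable_const.indicator ((hmeas i) hs)
  have hXindep : iIndepFun
      (fun i (ω : Ω) => (ξ i ⁻¹' s).indicator (fun _ => (1:ℝ)) ω) ℙ := by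
    have h2 := hindep.comp (fun _ => s.indicator fun _ => (1:ℝ))
      (fun _ => measurable_const.indicator hs)
    have hfam : (fun i (ω : Ω) => (ξ i ⁻¹' s).indicator (fun _ => (1:ℝ)) ω)
        = fun i => (s.indicator fun _ => (1:ℝ)) ∘ ξ i :=
      funext fun i => ind_comp s (ξ i)
    rw [hfam]
    exact h2
  have hXint : ∀ i, Integrable (fun ω => Real.exp
      (t * (ξ i ⁻¹' s).indicator (fun _ => (1:ℝ)) ω)) ℙ :=
    fun i => integrable_exp_mul_ind t _ ((hmeas i) hs)
  have hsum_eq : (∑ i, fun ω => (ξ i ⁻¹' s).indicator (fun _ => (1:ℝ)) ω)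
      = fun ω => ∑ i, (ξ i ⁻¹' s).indicator (fun _ => (1:ℝ)) ω := by
    funext ω; simp [Finset.sum_apply]
  have hint : Integrable (fun ω => Real.exp
      (t * (∑ i, fun ω => (ξ i ⁻¹' s).indicator (fun _ => (1:ℝ)) ω) ω)) ℙ :=
    hXindep.integrable_exp_mul_sum hXmeas (fun i _ => hXint i)
  constructor
  · simp only [hsum_eq] at hint; exact hint
  · rw [← hsum_eq, hXindep.mgf_sum hXmeas]
    have hmgf : ∀ i : Fin n, mgf (fun ω => (ξ i ⁻¹' s).indicator (fun _ => (1:ℝ)) ω) ℙ t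
        = 1 + p * (Real.exp t - 1) := fun i => by
      have := mgf_indicator (Ω := Ω) t (ξ i ⁻¹' s) ((hmeas i) hs)
      simpa [hp i] using this
    calc ∏ i, mgf (fun ω => (ξ i ⁻¹' s).indicator (fun _ => (1:ℝ)) ω) ℙ t
        = (1 + p * (Real.exp t - 1)) ^ n := by simp [hmgf, Finset.prod_const]
      _ ≤ Real.exp (p * (Real.exp t - 1)) ^ n := by
          apply pow_le_pow_left₀
          · nlinarith [Real.exp_nonneg t]
          · linarith [Real.add_one_le_exp (p * (Real.exp t - 1))]
      _ = Real.exp (n * (p * (Real.exp t - 1))) := by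
          rw [← Real.exp_nat_mul]

lemma chernoff_ge (hmeas : ∀ i, Measurable (ξ i))
    (hindep : iIndepFun ξ ℙ)
    {s : Set ℝ} (hs : MeasurableSet s) {p : ℝ}
    (hp : ∀ i, (ℙ (ξ i ⁻¹' s)).toReal = p) (hp0 : 0 ≤ p) (hp1 : p ≤ 1)
    {t : ℝ} (c : ℝ) (ht : 0 ≤ t) :
    ℙ {ω | c ≤ ∑ i, (ξ i ⁻¹' s).indicator (fun _ => (1:ℝ)) ω} ≤
      ENNReal.ofReal (Real.exp (-t * c + n * (p * (Real.exp t - 1)))) := by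
  obtain ⟨hint, hmgf⟩ := chernoff_core hmeas hindep hs hp hp0 hp1 t
  have h := measure_ge_le_exp_mul_mgf (μ := ℙ)
    (X := fun ω => ∑ i, (ξ i ⁻¹' s).indicator (fun _ => (1:ℝ)) ω) c ht hint
  have h2 : (ℙ {ω | c ≤ ∑ i, (ξ i ⁻¹' s).indicator (fun _ => (1:ℝ)) ω}).toReal ≤
      Real.exp (-t * c + n * (p * (Real.exp t - 1))) := by
    rw [Real.exp_add]
    refine h.trans ?_
    have := Real.exp_nonneg (-t * c)
    have hm0 : 0 ≤ mgf (fun ω => ∑ i, (ξ i ⁻¹' s).indicator (fun _ => (1:ℝ)) ω) ℙ t :=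
      mgf_nonneg
    nlinarith
  calc ℙ _ = ENNReal.ofReal ((ℙ {ω | c ≤ ∑ i, (ξ i ⁻¹' s).indicator (fun _ => (1:ℝ)) ω}).toReal) :=
        (ENNReal.ofReal_toReal (measure_ne_top _ _)).symm
    _ ≤ _ := ENNReal.ofReal_le_ofReal h2

lemma chernoff_le (hmeas : ∀ i, Measurable (ξ i))
    (hindep : iIndepFun ξ ℙ)
    {s : Set ℝ} (hs : MeasurableSet s) {p : ℝ}
    (hp : ∀ i, (ℙ (ξ i ⁻¹' s)).toReal = p) (hp0 : 0 ≤ p) (hp1 : p ≤ 1)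
    {t : ℝ} (c : ℝ) (ht : t ≤ 0) :
    ℙ {ω | ∑ i, (ξ i ⁻¹' s).indicator (fun _ => (1:ℝ)) ω ≤ c} ≤
      ENNReal.ofReal (Real.exp (-t * c + n * (p * (Real.exp t - 1)))) := by
  obtain ⟨hint, hmgf⟩ := chernoff_core hmeas hindep hs hp hp0 hp1 t
  have h := measure_le_le_exp_mul_mgf (μ := ℙ)
    (X := fun ω => ∑ i, (ξ i ⁻¹' s).indicator (fun _ => (1:ℝ)) ω) c ht hint
  have h2 : (ℙ {ω | ∑ i, (ξ i ⁻¹' s).indicator (fun _ => (1:ℝ)) ω ≤ c}).toReal ≤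
      Real.exp (-t * c + n * (p * (Real.exp t - 1))) := by
    rw [Real.exp_add]
    refine h.trans ?_
    have := Real.exp_nonneg (-t * c)
    have hm0 : 0 ≤ mgf (fun ω => ∑ i, (ξ i ⁻¹' s).indicator (fun _ => (1:ℝ)) ω) ℙ t :=
      mgf_nonneg
    nlinarith
  calc ℙ _ = ENNReal.ofReal ((ℙ {ω | ∑ i, (ξ i ⁻¹' s).indicator (fun _ => (1:ℝ)) ω ≤ c}).toReal) :=
        (ENNReal.ofReal_toReal (measure_ne_top _ _)).symm
    _ ≤ _ := ENNReal.ofReal_le_ofReal h2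

lemma sum_ind_countP_lt (ξ : Fin n → Ω → ℝ) (ω : Ω) (a : ℝ) :
    ∑ i, (ξ i ⁻¹' Set.Iio a).indicator (fun _ => (1:ℝ)) ω
      = ((List.ofFn fun i => ξ i ω).countP (fun x => decide (x < a)) : ℝ) := by
  rw [countP_ofFn]
  push_cast
  refine Finset.sum_congr rfl fun i _ => ?_
  by_cases h : ξ i ω < a <;> simp [h]

lemma sum_ind_countP_le (ξ : Fin n → Ω → ℝ) (ω : Ω) (a : ℝ) :
    ∑ i, (ξ i ⁻¹' Set.Iic a).indicator (fun _ => (1:ℝ)) ω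
      = ((List.ofFn fun i => ξ i ω).countP (fun x => decide (x ≤ a)) : ℝ) := by
  rw [countP_ofFn]
  push_cast
  refine Finset.sum_congr rfl fun i _ => ?_
  by_cases h : ξ i ω ≤ a <;> simp [h]

end chernoff

lemma key1 {ε : ℝ} (h0 : 0 < ε) (h1 : ε < 1/2) : ε - 2*ε^2/3 ≤ Real.log (1+ε) := by
  rw [Real.le_log_iff_exp_le (by linarith)]
  have hy0 : 0 ≤ ε - 2*ε^2/3 := by nlinarith
  have hy1 : ε - 2*ε^2/3 ≤ 1 := by nlinarith
  have hb := Real.exp_bound' hy0 hy1 (n := 3) (by norm_num)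
  simp only [Finset.sum_range_succ, Finset.sum_range_zero, Nat.factorial] at hb
  norm_num at hb
  refine hb.trans ?_
  nlinarith [pow_pos h0 3, pow_pos h0 4, sq_nonneg ε, pow_pos h0 5, pow_pos h0 6]

lemma key2 {ε : ℝ} (h0 : 0 < ε) (h1 : ε < 1/2) : Real.log (1+ε) ≤ ε - ε^2/3 := by
  rw [Real.log_le_iff_le_exp (by linarith)]
  have hx0 : (0:ℝ) ≤ ε - ε^2/3 := by nlinarith
  have hx1 : |ε - ε^2/3| ≤ 1 := by rw [abs_of_nonneg hx0]; nlinarith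
  have hb := Real.exp_bound hx1 (n := 4) (by norm_num)
  rw [abs_of_nonneg hx0] at hb
  simp only [Finset.sum_range_succ, Finset.sum_range_zero, Nat.factorial] at hb
  norm_num at hb
  have hlow := (abs_le.mp hb).1
  nlinarith [pow_pos h0 3, pow_pos h0 4, pow_pos h0 5, pow_pos h0 6, pow_pos h0 7,
    pow_pos h0 8, sq_nonneg ε]

end Aux

theorem stmt4 {Ω : Type*} [MeasureSpace Ω] [IsProbabilityMeasure (ℙ : Measure Ω)]
    (n : ℕ) (ξ : Fin n → Ω → ℝ)
    (hmeas : ∀ i, Measurable (ξ i))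
    (hindep : iIndepFun ξ ℙ)
    (hgauss : ∀ i, Measure.map (ξ i) ℙ = gaussianReal 0 1)
    (k : ℕ) (hk1 : 1 ≤ k) (hkn : 2 * k ≤ n)
    (ε : ℝ) (hε0 : 0 < ε) (hε1 : ε < 1 / 2)
    (αp αm : ℝ)
    (hαp : stdGaussCDF αp = (1 + ε) * k / n)
    (hαm : stdGaussCDF αm = (1 - ε) * k / n) :
    ℙ {ω | orderStat (fun i => ξ i ω) k < αm} ≤
        ENNReal.ofReal (Real.exp (-(ε ^ 2 * k) / 3)) ∧
    ℙ {ω | αp < orderStat (fun i => ξ i ω) k} ≤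
        ENNReal.ofReal (Real.exp (-(ε ^ 2 * k) / 3)) := by
  have hn0 : 0 < n := by omega
  have hnR : (0:ℝ) < n := by exact_mod_cast hn0
  have hkR : (0:ℝ) < k := by exact_mod_cast hk1
  have h2k : 2*(k:ℝ) ≤ n := by exact_mod_cast hkn
  have hkn' : k ≤ n := by omega
  have hpm : ∀ i, (ℙ (ξ i ⁻¹' Set.Iio αm)).toReal = (1-ε)*k/n := fun i => by
    rw [← Measure.map_apply (hmeas i) measurableSet_Iio, hgauss i, gaussian_Iio,
      ENNReal.toReal_ofReal (stdGaussCDF_nonneg _), hαm]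
  have hpp : ∀ i, (ℙ (ξ i ⁻¹' Set.Iic αp)).toReal = (1+ε)*k/n := fun i => by
    rw [← Measure.map_apply (hmeas i) measurableSet_Iic, hgauss i, gaussian_Iic,
      ENNReal.toReal_ofReal (stdGaussCDF_nonneg _), hαp]
  have hpm0 : 0 ≤ (1-ε)*k/n := by
    apply div_nonneg _ hnR.le; nlinarith
  have hpm1 : (1-ε)*k/n ≤ 1 := by
    rw [div_le_one hnR]; nlinarith
  have hpp0 : 0 ≤ (1+ε)*k/n := by
    apply div_nonneg _ hnR.le; nlinarith
  have hpp1 : (1+ε)*k/n ≤ 1 := by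
    rw [div_le_one hnR]; nlinarith
  have h1ε : (0:ℝ) < 1 + ε := by linarith
  constructor
  · -- lower tail: ω_k < αm
    have ht0 : 0 ≤ Real.log (1+ε) := Real.log_nonneg (by linarith)
    have hexp_t : Real.exp (Real.log (1+ε)) = 1+ε := Real.exp_log h1ε
    have hch := chernoff_ge hmeas hindep measurableSet_Iio hpm hpm0 hpm1 ((k:ℝ)) ht0
    have hev : {ω | orderStat (fun i => ξ i ω) k < αm}
        = {ω | (k:ℝ) ≤ ∑ i, (ξ i ⁻¹' Set.Iio αm).indicator (fun _ => (1:ℝ)) ω} := by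
      ext ω
      simp only [Set.mem_setOf_eq]
      rw [orderStat_lt_iff _ hk1 hkn' αm, sum_ind_countP_lt]
      exact_mod_cast Iff.rfl
    rw [hev]
    refine hch.trans (ENNReal.ofReal_le_ofReal (Real.exp_le_exp.mpr ?_))
    rw [hexp_t]
    have hnp : (n:ℝ) * ((1-ε)*k/n * ((1+ε) - 1)) = (1-ε)*k*ε := by
      field_simp
      ring
    rw [hnp]
    have hkey := key1 hε0 hε1
    have := mul_le_mul_of_nonneg_left hkey hkR.le
    nlinarith
  · -- upper tail: ω_k > αp
    have ht0 : -Real.log (1+ε) ≤ 0 := neg_nonpos.mpr (Real.log_nonneg (by linarith))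
    have hexp_t : Real.exp (-Real.log (1+ε)) = (1+ε)⁻¹ := by
      rw [Real.exp_neg, Real.exp_log h1ε]
    have hch := chernoff_le hmeas hindep measurableSet_Iic hpp hpp0 hpp1 ((k:ℝ)) ht0
    have hev : {ω | αp < orderStat (fun i => ξ i ω) k}
        ⊆ {ω | ∑ i, (ξ i ⁻¹' Set.Iic αp).indicator (fun _ => (1:ℝ)) ω ≤ (k:ℝ)} := by
      intro ω hω
      simp only [Set.mem_setOf_eq] at hω ⊢
      rw [sum_ind_countP_le]
      have hc := (lt_orderStat_iff _ hk1 hkn' αp).mp hω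
      have : (List.ofFn fun i => ξ i ω).countP (fun x => decide (x ≤ αp)) ≤ k := by omega
      exact_mod_cast this
    refine (measure_mono hev).trans (hch.trans
      (ENNReal.ofReal_le_ofReal (Real.exp_le_exp.mpr ?_)))
    rw [hexp_t]
    have hnp : (n:ℝ) * ((1+ε)*k/n * ((1+ε)⁻¹ - 1)) = -(ε*k) := by
      field_simp
      ring
    rw [hnp]
    have hkey := key2 hε0 hε1
    have := mul_le_mul_of_nonneg_left hkey hkR.le
    nlinarith
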